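/- Let f = 1_V with V of positive probability, and suppose E[1_V (S 1_V)^2] ≤ η P(V) where S is the martingale square function for a finite filtration. Then E[1_V (S 1_V)^3] ≤ C η^{1/2} P(V) for an absolute constant C, using the L^6 boundedness of the martingale square function. -/

import Mathlib

open MeasureTheory Finset
open scoped ENNReal

/-- If `E[1_V (S 1_V)²] ≤ η P(V)` and the martingale square function is bounded on
`L⁶` with constant `C₆`, then `E[1_V (S 1_V)³] ≤ C η^{1/2} P(V)` with `C` depending
only on `C₆`. -/
theorem martingale_square_function_third_moment_small (C₆ : ℝ) (hC₆ : 0 < C₆) :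
    ∃ C : ℝ, 0 < C ∧
      ∀ (Ω : Type) (m0 : MeasurableSpace Ω) (μ : Measure Ω), IsProbabilityMeasure μ →
      ∀ (N : ℕ) (ℱ : ℕ → MeasurableSpace Ω), Monotone ℱ → (∀ n, ℱ n ≤ m0) →
      ∀ V : Set Ω, MeasurableSet[ℱ N] V → 0 < μ V →
      ∀ η : ℝ, 0 ≤ η →
      -- the square function `S 1_V`, written out pointwise
      ∀ S : Ω → ℝ,
        (∀ ω, S ω ^ 2 = ∑ n ∈ Icc 1 N,
            ((μ[V.indicator (fun _ => (1 : ℝ))|ℱ n]) ω -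
              (μ[V.indicator (fun _ => (1 : ℝ))|ℱ (n - 1)]) ω) ^ 2) →
        (∀ ω, 0 ≤ S ω) →
        -- assumed L⁶ boundedness of the square function (BDG-type bound)
        eLpNorm S 6 μ ≤ ENNReal.ofReal C₆ * eLpNorm (V.indicator (fun _ => (1 : ℝ))) 6 μ →
        -- smallness hypothesis
        ∫ ω, V.indicator (fun _ => (1 : ℝ)) ω * S ω ^ 2 ∂μ ≤ η * (μ V).toReal →
        ∫ ω, V.indicator (fun _ => (1 : ℝ)) ω * S ω ^ 3 ∂μ ≤
          C * η ^ (1 / 2 : ℝ) * (μ V).toReal := by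
  refine ⟨C₆ ^ 2, by positivity, ?_⟩
  intro Ω m0 μ hprob N ℱ hmono hle V hV hVpos η hη S hS2 hSnn hL6 hsmall
  set f : Ω → ℝ := V.indicator (fun _ => (1 : ℝ)) with hf_def
  have hVm : MeasurableSet V := hle N V hV
  have hμV_ne_top : μ V ≠ ⊤ := measure_ne_top μ V
  have hμV_ne_zero : μ V ≠ 0 := hVpos.ne'
  -- basic facts about `f`
  have hf_nn : ∀ ω, 0 ≤ f ω := fun ω => Set.indicator_nonneg (fun _ _ => zero_le_one) ω
  have hf_meas : Measurable f := (measurable_const.indicator hVm)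
  have hf_cases : ∀ ω, f ω = 0 ∨ f ω = 1 := by
    intro ω
    by_cases hω : ω ∈ V
    · right; simp [hf_def, Set.indicator_of_mem hω]
    · left; simp [hf_def, Set.indicator_of_notMem hω]
  -- measurability of `S`
  have hS_eq : ∀ ω, S ω = Real.sqrt (∑ n ∈ Icc 1 N,
      ((μ[V.indicator (fun _ => (1 : ℝ))|ℱ n]) ω -
        (μ[V.indicator (fun _ => (1 : ℝ))|ℱ (n - 1)]) ω) ^ 2) := by
    intro ω
    rw [← hS2]
    exact (Real.sqrt_sq (hSnn ω)).symm
  have hS_meas : Measurable S := by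
    have : Measurable fun ω => Real.sqrt (∑ n ∈ Icc 1 N,
        ((μ[V.indicator (fun _ => (1 : ℝ))|ℱ n]) ω -
          (μ[V.indicator (fun _ => (1 : ℝ))|ℱ (n - 1)]) ω) ^ 2) := by
      refine Real.continuous_sqrt.measurable.comp ?_
      refine Finset.measurable_sum _ fun n _ => ?_
      exact (((stronglyMeasurable_condExp.mono (hle n)).measurable.sub
        (stronglyMeasurable_condExp.mono (hle (n-1))).measurable)).pow measurable_const
    have hfun : S = fun ω => Real.sqrt (∑ n ∈ Icc 1 N,
        ((μ[V.indicator (fun _ => (1 : ℝ))|ℱ n]) ω -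
          (μ[V.indicator (fun _ => (1 : ℝ))|ℱ (n - 1)]) ω) ^ 2) := funext hS_eq
    rw [hfun]; exact this
  -- `S ∈ L⁶`
  have hf_mem : ∀ p : ENNReal, MemLp f p μ := fun p =>
    memLp_indicator_const p hVm 1 (Or.inr hμV_ne_top)
  have hS6 : MemLp S 6 μ := by
    refine ⟨hS_meas.aestronglyMeasurable, lt_of_le_of_lt hL6 ?_⟩
    exact ENNReal.mul_lt_top ENNReal.ofReal_lt_top ((hf_mem 6).2)
  -- integrability of `f * S ^ 2`
  have hfS2_int : Integrable (fun ω => f ω * S ω ^ 2) μ := by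
    have hS2int : Integrable (fun ω => S ω ^ 2) μ :=
      (hS6.mono_exponent (by norm_num)).integrable_sq
    exact hS2int.bdd_mul hf_meas.aestronglyMeasurable
      (c := 1) (Filter.Eventually.of_forall fun ω => by rcases hf_cases ω with h | h <;> simp [h])
  -- nonnegativity of the integrands
  have hnn3 : ∀ ω, 0 ≤ f ω * S ω ^ 3 := fun ω => mul_nonneg (hf_nn ω) (pow_nonneg (hSnn ω) 3)
  have hnn2 : ∀ ω, 0 ≤ f ω * S ω ^ 2 := fun ω => mul_nonneg (hf_nn ω) (by positivity)
  -- Step A : `∫⁻ f S² ≤ ofReal η * μ V`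
  have hA : ∫⁻ ω, ENNReal.ofReal (f ω * S ω ^ 2) ∂μ ≤ ENNReal.ofReal η * μ V := by
    rw [← ofReal_integral_eq_lintegral_ofReal hfS2_int (Filter.Eventually.of_forall hnn2)]
    calc ENNReal.ofReal (∫ ω, f ω * S ω ^ 2 ∂μ)
        ≤ ENNReal.ofReal (η * (μ V).toReal) := ENNReal.ofReal_le_ofReal hsmall
      _ = ENNReal.ofReal η * μ V := by
          rw [ENNReal.ofReal_mul hη, ENNReal.ofReal_toReal hμV_ne_top]
  -- Step S6 : `∫⁻ S⁶ ≤ (ofReal C₆)⁶ * μ V`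
  have hS6int : ∫⁻ ω, ENNReal.ofReal (S ω ^ 6) ∂μ ≤ ENNReal.ofReal C₆ ^ 6 * μ V := by
    have hnorm : eLpNorm f 6 μ = μ V ^ (1 / (6:ℝ)) := by
      rw [hf_def, eLpNorm_indicator_const hVm (by norm_num) (by norm_num)]
      simp [ENNReal.toReal_ofNat]
    have heq : ∫⁻ ω, ENNReal.ofReal (S ω ^ 6) ∂μ = eLpNorm S 6 μ ^ 6 := by
      rw [eLpNorm_eq_lintegral_rpow_enorm_toReal (by norm_num) (by norm_num)]
      rw [← ENNReal.rpow_natCast _ 6, ← ENNReal.rpow_mul]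
      have h6 : (6:ℝ≥0∞).toReal = (6:ℝ) := by norm_num
      rw [h6]
      norm_num
      refine lintegral_congr fun ω => ?_
      rw [ENNReal.ofReal_pow (hSnn ω), ← Real.enorm_eq_ofReal (hSnn ω),
        ← ENNReal.rpow_natCast]
    rw [heq]
    calc eLpNorm S 6 μ ^ 6 ≤ (ENNReal.ofReal C₆ * eLpNorm f 6 μ) ^ 6 :=
          pow_le_pow_left' hL6 6
      _ = ENNReal.ofReal C₆ ^ 6 * μ V := by
          rw [mul_pow, hnorm, ← ENNReal.rpow_natCast (μ V ^ _), ← ENNReal.rpow_mul]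
          norm_num
  -- Step B : `∫⁻ f S⁴ ≤ (ofReal C₆)⁴ * μ V`, by Hölder with exponents (3, 3/2)
  have hB : ∫⁻ ω, ENNReal.ofReal (f ω * S ω ^ 4) ∂μ ≤ ENNReal.ofReal C₆ ^ 4 * μ V := by
    have hpq : Real.HolderConjugate 3 (3/2) := by constructor <;> norm_num
    have hmono := ENNReal.lintegral_mul_le_Lp_mul_Lq μ hpq
      (f := fun ω => ENNReal.ofReal (f ω)) (g := fun ω => ENNReal.ofReal (S ω ^ 4))
      (hf_meas.ennreal_ofReal.aemeasurable)
      ((hS_meas.pow_const 4).ennreal_ofReal.aemeasurable)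
    have h1 : ∫⁻ ω, ENNReal.ofReal (f ω * S ω ^ 4) ∂μ =
        ∫⁻ ω, ((fun ω => ENNReal.ofReal (f ω)) * fun ω => ENNReal.ofReal (S ω ^ 4)) ω ∂μ := by
      refine lintegral_congr fun ω => ?_
      simp [ENNReal.ofReal_mul (hf_nn ω)]
    have h2 : ∫⁻ ω, ENNReal.ofReal (f ω) ^ (3:ℝ) ∂μ = μ V := by
      have : (fun ω => ENNReal.ofReal (f ω) ^ (3:ℝ)) = V.indicator (fun _ => (1:ℝ≥0∞)) := by
        funext ω
        by_cases hω : ω ∈ V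
        · simp [hf_def, Set.indicator_of_mem hω]
        · simp [hf_def, Set.indicator_of_notMem hω, ENNReal.zero_rpow_of_pos]
      rw [this]
      exact lintegral_indicator_one hVm
    have h3 : ∫⁻ ω, ENNReal.ofReal (S ω ^ 4) ^ ((3:ℝ)/2) ∂μ =
        ∫⁻ ω, ENNReal.ofReal (S ω ^ 6) ∂μ := by
      refine lintegral_congr fun ω => ?_
      rw [ENNReal.ofReal_rpow_of_nonneg (by positivity) (by norm_num)]
      congr 1
      rw [← Real.rpow_natCast (S ω) 4, ← Real.rpow_mul (hSnn ω),
        show ((4:ℕ):ℝ) * ((3:ℝ)/2) = ((6:ℕ):ℝ) by norm_num, Real.rpow_natCast]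
    calc ∫⁻ ω, ENNReal.ofReal (f ω * S ω ^ 4) ∂μ
        ≤ (∫⁻ ω, ENNReal.ofReal (f ω) ^ (3:ℝ) ∂μ) ^ (1/(3:ℝ)) *
          (∫⁻ ω, ENNReal.ofReal (S ω ^ 4) ^ ((3:ℝ)/2) ∂μ) ^ (1/((3:ℝ)/2)) := by
          rw [h1]; simpa using hmono
      _ ≤ (μ V) ^ (1/(3:ℝ)) * (ENNReal.ofReal C₆ ^ 6 * μ V) ^ (1/((3:ℝ)/2)) := by
          rw [h2, h3]
          exact mul_le_mul_right (ENNReal.rpow_le_rpow hS6int (by norm_num)) _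
      _ = ENNReal.ofReal C₆ ^ 4 * μ V := by
          rw [ENNReal.mul_rpow_of_nonneg _ _ (by norm_num : (0:ℝ) ≤ 1/((3:ℝ)/2))]
          rw [← ENNReal.rpow_natCast (ENNReal.ofReal C₆) 6, ← ENNReal.rpow_mul]
          rw [mul_comm ((μ V) ^ (1/(3:ℝ)))]
          rw [mul_assoc, ← ENNReal.rpow_add _ _ hμV_ne_zero hμV_ne_top]
          norm_num
  -- Step CS : Cauchy–Schwarz
  have hCS : ∫⁻ ω, ENNReal.ofReal (f ω * S ω ^ 3) ∂μ ≤
      (∫⁻ ω, ENNReal.ofReal (f ω * S ω ^ 2) ∂μ) ^ (1/(2:ℝ)) *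
      (∫⁻ ω, ENNReal.ofReal (f ω * S ω ^ 4) ∂μ) ^ (1/(2:ℝ)) := by
    have hpq : Real.HolderConjugate 2 2 := by constructor <;> norm_num
    have hmono := ENNReal.lintegral_mul_le_Lp_mul_Lq μ hpq
      (f := fun ω => ENNReal.ofReal (f ω * S ω)) (g := fun ω => ENNReal.ofReal (f ω * S ω ^ 2))
      ((hf_meas.mul hS_meas).ennreal_ofReal.aemeasurable)
      ((hf_meas.mul (hS_meas.pow_const 2)).ennreal_ofReal.aemeasurable)
    have h1 : ∫⁻ ω, ENNReal.ofReal (f ω * S ω ^ 3) ∂μ =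
        ∫⁻ ω, ((fun ω => ENNReal.ofReal (f ω * S ω)) *
          fun ω => ENNReal.ofReal (f ω * S ω ^ 2)) ω ∂μ := by
      refine lintegral_congr fun ω => ?_
      have : f ω * S ω ^ 3 = (f ω * S ω) * (f ω * S ω ^ 2) := by
        rcases hf_cases ω with h | h <;> simp [h] <;> ring
      rw [this, Pi.mul_apply,
        ENNReal.ofReal_mul (mul_nonneg (hf_nn ω) (hSnn ω))]
    have h2 : ∀ ω, ENNReal.ofReal (f ω * S ω) ^ (2:ℝ) = ENNReal.ofReal (f ω * S ω ^ 2) := by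
      intro ω
      rw [ENNReal.ofReal_rpow_of_nonneg (mul_nonneg (hf_nn ω) (hSnn ω)) (by norm_num)]
      congr 1
      rcases hf_cases ω with h | h
      · simp [h, Real.zero_rpow]
      · rw [h, one_mul, one_mul, show (2:ℝ) = ((2:ℕ):ℝ) by norm_num,
          Real.rpow_natCast]
    have h3 : ∀ ω, ENNReal.ofReal (f ω * S ω ^ 2) ^ (2:ℝ) = ENNReal.ofReal (f ω * S ω ^ 4) := by
      intro ω
      rw [ENNReal.ofReal_rpow_of_nonneg (hnn2 ω) (by norm_num)]
      congr 1
      rcases hf_cases ω with h | h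
      · simp [h, Real.zero_rpow]
      · rw [h, one_mul, one_mul, show (2:ℝ) = ((2:ℕ):ℝ) by norm_num,
          Real.rpow_natCast]
        ring
    calc ∫⁻ ω, ENNReal.ofReal (f ω * S ω ^ 3) ∂μ
        ≤ (∫⁻ ω, ENNReal.ofReal (f ω * S ω) ^ (2:ℝ) ∂μ) ^ (1/(2:ℝ)) *
          (∫⁻ ω, ENNReal.ofReal (f ω * S ω ^ 2) ^ (2:ℝ) ∂μ) ^ (1/(2:ℝ)) := by
          rw [h1]; simpa using hmono
      _ = (∫⁻ ω, ENNReal.ofReal (f ω * S ω ^ 2) ∂μ) ^ (1/(2:ℝ)) *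
          (∫⁻ ω, ENNReal.ofReal (f ω * S ω ^ 4) ∂μ) ^ (1/(2:ℝ)) := by
          rw [lintegral_congr h2, lintegral_congr h3]
  -- assemble the lintegral bound
  have hkey : ∫⁻ ω, ENNReal.ofReal (f ω * S ω ^ 3) ∂μ ≤
      ENNReal.ofReal (C₆ ^ 2 * η ^ (1/2:ℝ)) * μ V := by
    calc ∫⁻ ω, ENNReal.ofReal (f ω * S ω ^ 3) ∂μ
        ≤ (ENNReal.ofReal η * μ V) ^ (1/(2:ℝ)) *
          (ENNReal.ofReal C₆ ^ 4 * μ V) ^ (1/(2:ℝ)) := by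
          exact le_trans hCS (mul_le_mul'
            (ENNReal.rpow_le_rpow hA (by norm_num))
            (ENNReal.rpow_le_rpow hB (by norm_num)))
      _ = ENNReal.ofReal (C₆ ^ 2 * η ^ (1/2:ℝ)) * μ V := by
          rw [ENNReal.mul_rpow_of_nonneg _ _ (by norm_num : (0:ℝ) ≤ 1/2),
            ENNReal.mul_rpow_of_nonneg _ _ (by norm_num : (0:ℝ) ≤ 1/2)]
          rw [← ENNReal.rpow_natCast (ENNReal.ofReal C₆) 4, ← ENNReal.rpow_mul]
          have h4 : ((4:ℕ):ℝ) * (1/2) = 2 := by norm_num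
          rw [h4, ENNReal.rpow_two]
          rw [ENNReal.ofReal_mul (by positivity), ← ENNReal.ofReal_rpow_of_nonneg hη (by norm_num)]
          rw [ENNReal.ofReal_pow hC₆.le 2]
          have hμ : μ V ^ (1/(2:ℝ)) * μ V ^ (1/(2:ℝ)) = μ V := by
            rw [← ENNReal.rpow_add _ _ hμV_ne_zero hμV_ne_top]; norm_num
          calc ENNReal.ofReal η ^ (1/(2:ℝ)) * μ V ^ (1/(2:ℝ)) *
                (ENNReal.ofReal C₆ ^ 2 * μ V ^ (1/(2:ℝ)))
              = ENNReal.ofReal C₆ ^ 2 * ENNReal.ofReal η ^ (1/(2:ℝ)) *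
                (μ V ^ (1/(2:ℝ)) * μ V ^ (1/(2:ℝ))) := by ring
            _ = ENNReal.ofReal C₆ ^ 2 * ENNReal.ofReal (η ^ (1/2:ℝ)) * μ V := by
                rw [hμ, ENNReal.ofReal_rpow_of_nonneg hη (by norm_num)]
            _ = _ := by rw [← ENNReal.ofReal_rpow_of_nonneg hη (by norm_num)]
  -- convert back to a Bochner integral
  rw [integral_eq_lintegral_of_nonneg_ae (Filter.Eventually.of_forall hnn3)
    ((hf_meas.mul (hS_meas.pow_const 3)).aestronglyMeasurable)]
  have hfin : ENNReal.ofReal (C₆ ^ 2 * η ^ (1/2:ℝ)) * μ V ≠ ⊤ :=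
    ENNReal.mul_ne_top ENNReal.ofReal_ne_top hμV_ne_top
  calc (∫⁻ ω, ENNReal.ofReal (f ω * S ω ^ 3) ∂μ).toReal
      ≤ (ENNReal.ofReal (C₆ ^ 2 * η ^ (1/2:ℝ)) * μ V).toReal := ENNReal.toReal_mono hfin hkey
    _ = C₆ ^ 2 * η ^ (1/2:ℝ) * (μ V).toReal := by
        rw [ENNReal.toReal_mul, ENNReal.toReal_ofReal (by positivity)]
    _ = C₆ ^ 2 * η ^ (1 / 2 : ℝ) * (μ V).toReal := by norm_num
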